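/- Let K = ℚ(√5) ⊂ ℝ with ring of integers O_K, nontrivial automorphism x ↦ x', and ε₀ = (1+√5)/2. Then {λ ∈ K : λ√5 ∈ O_K and λλ' = -1/5} = {±ε₀^{2n}/√5 : n ∈ ℤ}. -/

import Mathlib

/-- Membership in `K = ℚ(√p) ⊂ ℝ`. -/
def inK (p : ℕ) (x : ℝ) : Prop := ∃ u v : ℚ, x = (u : ℝ) + (v : ℝ) * Real.sqrt p

/-- Membership in the ring of integers `O_K` of `K = ℚ(√p)`. -/
def inOK (p : ℕ) (x : ℝ) : Prop := inK p x ∧ IsIntegral ℤ x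

/-- Membership in the inverse different `d⁻¹ = {λ ∈ K : λ√p ∈ O_K}`. -/
def inDinv (p : ℕ) (x : ℝ) : Prop := inK p x ∧ inOK p (x * Real.sqrt p)

/-- The conjugation `x = u + v√p ↦ x' = u - v√p` of `K = ℚ(√p)` (extended by the
identity off `K`; on `K` it is well defined since `√p` is irrational). -/
noncomputable def conjK (p : ℕ) (x : ℝ) : ℝ := by
  classical
  exact if h : ∃ u v : ℚ, x = (u : ℝ) + (v : ℝ) * Real.sqrt p then
    (h.choose : ℝ) - (h.choose_spec.choose : ℝ) * Real.sqrt p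
  else x

open Polynomial

noncomputable def sq5 : ℝ := Real.sqrt 5

lemma sq5_sq : sq5 ^ 2 = 5 := Real.sq_sqrt (by norm_num)
lemma sq5_pos : 0 < sq5 := Real.sqrt_pos.mpr (by norm_num)
lemma sq5_gt : 2 < sq5 := by
  nlinarith [sq5_sq, sq5_pos]
lemma sq5_lt : sq5 < 2.3 := by nlinarith [sq5_sq, sq5_pos]
lemma sq5_irr : Irrational sq5 := (by norm_num : Nat.Prime 5).irrational_sqrt

lemma repr_unique {u v u' v' : ℚ} (h : (u:ℝ) + v * sq5 = u' + v' * sq5) :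
    u = u' ∧ v = v' := by
  by_cases hv : v = v'
  · subst hv
    refine ⟨?_, rfl⟩
    have : (u:ℝ) = u' := by linarith
    exact_mod_cast this
  · exfalso
    have hne : ((v' - v : ℚ) : ℝ) ≠ 0 := by
      simp only [ne_eq, Rat.cast_eq_zero, sub_eq_zero]
      exact fun h' => hv h'.symm
    have : sq5 = (((u - u') / (v' - v) : ℚ) : ℝ) := by
      have hne' : ((v':ℝ) - (v:ℝ)) ≠ 0 := by push_cast at hne; exact hne
      push_cast
      rw [eq_div_iff hne']
      linarith [h]
    exact sq5_irr ⟨_, this.symm⟩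

lemma rat_integral (q : ℚ) (h : IsIntegral ℤ ((q:ℝ))) : ∃ z : ℤ, (z:ℚ) = q := by
  rw [show ((q:ℝ)) = algebraMap ℚ ℝ q from rfl,
    isIntegral_algebraMap_iff (algebraMap ℚ ℝ).injective] at h
  exact IsIntegrallyClosed.isIntegral_iff.mp h

lemma conj_eval (u v : ℚ) : conjK 5 ((u:ℝ) + v * sq5) = u - v * sq5 := by
  unfold conjK
  have hex : ∃ u' v' : ℚ, ((u:ℝ) + v * sq5) = u' + v' * Real.sqrt ((5:ℕ):ℝ) :=
    ⟨u, v, by norm_num [sq5]⟩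
  rw [dif_pos hex]
  have hspec := hex.choose_spec.choose_spec
  obtain ⟨hu, hv⟩ := repr_unique (u := u) (v := v) (by simpa [sq5] using hspec)
  have e1 : ((hex.choose : ℚ):ℝ) = (u:ℝ) := congrArg (fun q : ℚ => (q:ℝ)) hu.symm
  have e2 : ((hex.choose_spec.choose : ℚ):ℝ) = (v:ℝ) := congrArg (fun q : ℚ => (q:ℝ)) hv.symm
  have h5 : Real.sqrt ((5:ℕ):ℝ) = sq5 := by norm_num [sq5]
  linear_combination e1 - Real.sqrt ((5:ℕ):ℝ) * e2 - (v:ℝ) * h5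

lemma poly_conj (a b : ℚ) (P : Polynomial ℤ) :
    ∃ A B : ℚ, Polynomial.aeval ((a:ℝ) + b * sq5) P = A + B * sq5 ∧
      Polynomial.aeval ((a:ℝ) - b * sq5) P = A - B * sq5 := by
  induction P using Polynomial.induction_on with
  | C c => exact ⟨c, 0, by simp, by simp⟩
  | add p q hp hq =>
      obtain ⟨A, B, h1, h2⟩ := hp
      obtain ⟨A', B', h1', h2'⟩ := hq
      exact ⟨A + A', B + B', by push_cast; simp [h1, h1']; ring,
        by push_cast; simp [h2, h2']; ring⟩
  | monomial n c hp =>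
      obtain ⟨A, B, h1, h2⟩ := hp
      refine ⟨a * A + 5 * b * B, a * B + b * A, ?_, ?_⟩
      · have : Polynomial.aeval ((a:ℝ) + b * sq5) (Polynomial.C c * Polynomial.X ^ (n+1))
            = ((a:ℝ) + b * sq5) * Polynomial.aeval ((a:ℝ) + b * sq5) (Polynomial.C c * Polynomial.X ^ n) := by
          simp; ring
        rw [this, h1]; push_cast; linear_combination (b:ℝ)*(B:ℝ)*sq5_sq
      · have : Polynomial.aeval ((a:ℝ) - b * sq5) (Polynomial.C c * Polynomial.X ^ (n+1))
            = ((a:ℝ) - b * sq5) * Polynomial.aeval ((a:ℝ) - b * sq5) (Polynomial.C c * Polynomial.X ^ n) := by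
          simp; ring
        rw [this, h2]; push_cast; linear_combination (b:ℝ)*(B:ℝ)*sq5_sq

lemma trace_int (a b : ℚ) (hint : IsIntegral ℤ ((a:ℝ) + b * sq5)) :
    ∃ T : ℤ, (T:ℚ) = 2 * a := by
  obtain ⟨P, Pmonic, hP⟩ := hint
  obtain ⟨A, B, h1, h2⟩ := poly_conj a b P
  rw [← Polynomial.aeval_def] at hP
  rw [hP] at h1
  have hB : B = 0 := by
    by_contra hB
    have : sq5 = ((-A / B : ℚ) : ℝ) := by
      have hBne : ((B:ℚ):ℝ) ≠ 0 := by exact_mod_cast hB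
      push_cast
      rw [eq_div_iff hBne]
      linarith [h1]
    exact sq5_irr ⟨_, this.symm⟩
  have hA : A = 0 := by
    rw [hB] at h1
    have : ((A:ℚ):ℝ) = 0 := by push_cast at h1 ⊢; linarith
    exact_mod_cast this
  rw [hA, hB] at h2
  have hconj : IsIntegral ℤ ((a:ℝ) - b * sq5) := by
    refine ⟨P, Pmonic, ?_⟩
    rw [← Polynomial.aeval_def, h2]
    norm_num
  have hsum : IsIntegral ℤ (((2 * a : ℚ) : ℝ)) := by
    have hx : IsIntegral ℤ ((a:ℝ) + b * sq5) := ⟨P, Pmonic, by rw [← Polynomial.aeval_def]; exact hP⟩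
    have := IsIntegral.add hx hconj
    convert this using 1
    exacts [rfl, by push_cast; ring]
  obtain ⟨z, hz⟩ := rat_integral _ hsum
  exact ⟨z, hz⟩

lemma denom_lemma (r : ℚ) (k : ℤ) (h : 5 * r^2 = (k:ℚ)) : ∃ z : ℤ, (z:ℚ) = r := by
  have h25 : (5*r)^2 = ((5*k : ℤ) : ℚ) := by push_cast; nlinarith [h]
  have hint : IsIntegral ℤ ((5*r : ℚ)) := by
    refine ⟨Polynomial.X^2 - Polynomial.C (5*k), by monicity!, ?_⟩
    rw [← Polynomial.aeval_def, map_sub, map_pow, Polynomial.aeval_X, Polynomial.aeval_C]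
    rw [show algebraMap ℤ ℚ (5*k) = ((5*k:ℤ):ℚ) from rfl, ← h25]
    ring
  have : IsIntegral ℤ (((5*r : ℚ) : ℝ)) := by
    rw [show (((5*r:ℚ)):ℝ) = algebraMap ℚ ℝ (5*r) from rfl,
      isIntegral_algebraMap_iff (algebraMap ℚ ℝ).injective]
    exact hint
  obtain ⟨w, hw⟩ := rat_integral _ this
  have hw2 : w^2 = 5*k := by
    have : ((w^2 : ℤ):ℚ) = ((5*k:ℤ):ℚ) := by push_cast at hw h25 ⊢; rw [hw]; exact_mod_cast h25
    exact_mod_cast this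
  have h5w : (5:ℤ) ∣ w := by
    have hp : Prime (5:ℤ) := by norm_num
    have : (5:ℤ) ∣ w^2 := ⟨k, hw2⟩
    exact hp.dvd_of_dvd_pow this
  obtain ⟨z, hz⟩ := h5w
  refine ⟨z, ?_⟩
  have : (5:ℚ) * z = 5 * r := by rw [← hw, hz]; push_cast; ring
  linarith

noncomputable def phi : ℝ := (1 + sq5) / 2
noncomputable def psi : ℝ := (1 - sq5) / 2

lemma phi_pos : 0 < phi := by unfold phi; nlinarith [sq5_gt]
lemma phi_ne : phi ≠ 0 := ne_of_gt phi_pos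
lemma psi_ne : psi ≠ 0 := by unfold psi; nlinarith [sq5_gt]
lemma phi_mul_psi : phi * psi = -1 := by
  unfold phi psi; nlinarith [sq5_sq]

lemma pow_repr (k : ℤ) : ∃ a b : ℚ, phi ^ k = (a:ℝ) + b * sq5 ∧ psi ^ k = (a:ℝ) - b * sq5 := by
  induction k using Int.induction_on with
  | zero => exact ⟨1, 0, by norm_num, by norm_num⟩
  | succ n ih =>
      obtain ⟨a, b, h1, h2⟩ := ih
      refine ⟨(a + 5*b)/2, (a + b)/2, ?_, ?_⟩
      · rw [zpow_add_one₀ phi_ne, h1]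
        unfold phi; push_cast; linear_combination ((b:ℝ)/2)*sq5_sq
      · rw [zpow_add_one₀ psi_ne, h2]
        unfold psi; push_cast; linear_combination ((b:ℝ)/2)*sq5_sq
  | pred n ih =>
      obtain ⟨a, b, h1, h2⟩ := ih
      refine ⟨(-a + 5*b)/2, (a - b)/2, ?_, ?_⟩
      · rw [show (-(n:ℤ) - 1) = (-(n:ℤ)) + (-1) by ring, zpow_add₀ phi_ne, h1, zpow_neg_one]
        have hinv : phi⁻¹ = (-1 + sq5)/2 :=
          inv_eq_of_mul_eq_one_right (by unfold phi; nlinarith [sq5_sq])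
        rw [hinv]; push_cast; linear_combination ((b:ℝ)/2)*sq5_sq
      · rw [show (-(n:ℤ) - 1) = (-(n:ℤ)) + (-1) by ring, zpow_add₀ psi_ne, h2, zpow_neg_one]
        have hinv : psi⁻¹ = (-1 - sq5)/2 :=
          inv_eq_of_mul_eq_one_right (by unfold psi; nlinarith [sq5_sq])
        rw [hinv]; push_cast; linear_combination ((b:ℝ)/2)*sq5_sq

lemma phi_integral : IsIntegral ℤ phi := by
  refine ⟨Polynomial.X^2 - Polynomial.X - Polynomial.C 1, by monicity!, ?_⟩
  rw [← Polynomial.aeval_def]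
  simp only [map_sub, map_pow, Polynomial.aeval_X, Polynomial.aeval_C]
  unfold phi
  have : algebraMap ℤ ℝ 1 = 1 := by norm_num
  rw [this]
  nlinarith [sq5_sq]

lemma phi_inv_integral : IsIntegral ℤ phi⁻¹ := by
  have hinv : phi⁻¹ = (-1 + sq5)/2 :=
    inv_eq_of_mul_eq_one_right (by unfold phi; nlinarith [sq5_sq])
  rw [hinv]
  refine ⟨Polynomial.X^2 + Polynomial.X - Polynomial.C 1, by monicity!, ?_⟩
  rw [← Polynomial.aeval_def]
  simp only [map_sub, map_add, map_pow, Polynomial.aeval_X, Polynomial.aeval_C]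
  have : algebraMap ℤ ℝ 1 = 1 := by norm_num
  rw [this]
  nlinarith [sq5_sq]

lemma phi_zpow_integral (k : ℤ) : IsIntegral ℤ (phi ^ k) := by
  rcases le_or_gt 0 k with hk | hk
  · lift k to ℕ using hk
    rw [zpow_natCast]
    exact phi_integral.pow k
  · have : phi ^ k = (phi⁻¹) ^ (-k).toNat := by
      rw [inv_pow, ← zpow_natCast, Int.toNat_of_nonneg (by omega), zpow_neg, inv_inv]
    rw [this]
    exact phi_inv_integral.pow _

lemma parity_lemma {m n : ℤ} (h : m^2 - 5*n^2 = 4) : (2:ℤ) ∣ (m - n) := by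
  rcases Int.even_or_odd m with ⟨r, hr⟩ | ⟨r, hr⟩ <;>
    rcases Int.even_or_odd n with ⟨w, hw⟩ | ⟨w, hw⟩
  · omega
  · exfalso
    have h4 : (4:ℤ) ∣ 9 := ⟨r^2 - 5*w^2 - 5*w, by subst hr hw; linear_combination -h⟩
    norm_num at h4
  · exfalso
    have h4 : (4:ℤ) ∣ 3 := ⟨r^2 + r - 5*w^2, by subst hr hw; linear_combination -h⟩
    norm_num at h4
  · omega

lemma phi_sq : phi^2 = (3 + sq5)/2 := by
  unfold phi; linear_combination sq5_sq/4

set_option maxHeartbeats 1000000 in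
lemma key : ∀ B : ℕ, ∀ m n : ℤ, m ≤ (B:ℤ) → m^2 - 5*n^2 = 4 →
    1 ≤ ((m:ℝ) + n * sq5)/2 → ∃ k : ℕ, ((m:ℝ) + n * sq5)/2 = phi ^ (2*k) := by
  intro B
  induction B with
  | zero =>
      intro m n hm hnorm hpos
      exfalso
      have hnr : ((m:ℝ))^2 - 5*(n:ℝ)^2 = 4 := by exact_mod_cast hnorm
      have hprod : (((m:ℝ) + n*sq5)/2) * (((m:ℝ) - n*sq5)/2) = 1 := by
        linear_combination hnr/4 - ((n:ℝ)^2/4)*sq5_sq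
      have hμ'pos : 0 < ((m:ℝ) - n*sq5)/2 := by nlinarith
      have : (0:ℝ) < m := by nlinarith
      have : (0:ℤ) < m := by exact_mod_cast this
      omega
  | succ B ih =>
      intro m n hm hnorm hpos
      have hnr : ((m:ℝ))^2 - 5*(n:ℝ)^2 = 4 := by exact_mod_cast hnorm
      set μ : ℝ := ((m:ℝ) + n*sq5)/2 with hμdef
      set μ' : ℝ := ((m:ℝ) - n*sq5)/2 with hμ'def
      have hprod : μ * μ' = 1 := by
        rw [hμdef, hμ'def]; linear_combination hnr/4 - ((n:ℝ)^2/4)*sq5_sq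
      have hμ'pos : 0 < μ' := by nlinarith
      have hμ'le : μ' ≤ 1 := by nlinarith
      by_cases hgap : μ < (3 + sq5)/2
      · -- small case : μ = 1
        have hμ'gt : (3 - sq5)/2 < μ' := by nlinarith [sq5_sq, sq5_gt]
        have hmr : (m:ℝ) = μ + μ' := by rw [hμdef, hμ'def]; ring
        have hm2 : 2 ≤ m := by
          have h1 : (1:ℝ) < m := by rw [hmr]; nlinarith [sq5_lt]
          have : (1:ℤ) < m := by exact_mod_cast h1
          omega
        have hm3 : m ≤ 3 := by
          have h1 : (m:ℝ) < 4 := by rw [hmr]; nlinarith [sq5_lt, sq5_gt]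
          have : m < (4:ℤ) := by exact_mod_cast h1
          omega
        have hnr2 : (n:ℝ)*sq5 = μ - μ' := by rw [hμdef, hμ'def]; ring
        have hn0 : n = 0 := by
          rcases lt_trichotomy n 0 with h | h | h
          · exfalso
            have : (n:ℝ) ≤ -1 := by exact_mod_cast (by omega : n ≤ -1)
            nlinarith [sq5_pos]
          · exact h
          · exfalso
            have : (1:ℝ) ≤ n := by exact_mod_cast (by omega : 1 ≤ n)
            nlinarith [sq5_pos]
        subst hn0
        interval_cases m
        · refine ⟨0, ?_⟩
          rw [hμdef]; push_cast; norm_num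
        · exfalso; norm_num at hnorm
      · -- descent
        have hφ2 : (3 + sq5)/2 ≤ μ := not_lt.mp hgap
        obtain ⟨t, ht⟩ := parity_lemma hnorm
        set m1 : ℤ := 3*t - n with hm1def
        set n1 : ℤ := n - t with hn1def
        have e1 : 2*m1 = 3*m - 5*n := by omega
        have e2 : 2*n1 = 3*n - m := by omega
        have hnorm1 : m1^2 - 5*n1^2 = 4 := by
          have h4 : 4*(m1^2 - 5*n1^2) = 16 := by
            linear_combination (2*m1 + 3*m - 5*n)*e1 - 5*(2*n1 + 3*n - m)*e2 + 4*hnorm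
          linarith
        have er1 : (2:ℝ)*(m1:ℝ) = 3*(m:ℝ) - 5*(n:ℝ) := by exact_mod_cast e1
        have er2 : (2:ℝ)*(n1:ℝ) = 3*(n:ℝ) - (m:ℝ) := by exact_mod_cast e2
        set ν : ℝ := ((m1:ℝ) + n1*sq5)/2 with hνdef
        set ν' : ℝ := ((m1:ℝ) - n1*sq5)/2 with hν'def
        have hnr1 : ((m1:ℝ))^2 - 5*(n1:ℝ)^2 = 4 := by exact_mod_cast hnorm1
        have hprod1 : ν * ν' = 1 := by
          rw [hνdef, hν'def]; linear_combination hnr1/4 - ((n1:ℝ)^2/4)*sq5_sq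
        have hrel : μ = ν * ((3 + sq5)/2) := by
          rw [hμdef, hνdef]
          linear_combination (-(3+sq5)/8)*er1 + (-(3*sq5+5)/8)*er2 - ((n1:ℝ)/4)*sq5_sq
        have h3s : (0:ℝ) < (3+sq5)/2 := by nlinarith [sq5_gt]
        have hν1 : 1 ≤ ν := by
          by_contra hcon
          push_neg at hcon
          have hlt : μ < (3+sq5)/2 := by
            rw [hrel]
            nlinarith [mul_pos (by linarith : (0:ℝ) < 1 - ν) h3s]
          linarith [hφ2]
        have hνpos : (0:ℝ) < ν := by linarith
        have hν'inv : ν' = ν⁻¹ := eq_inv_of_mul_eq_one_left ((mul_comm ν ν') ▸ hprod1)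
        have hν'pos : 0 < ν' := by rw [hν'inv]; exact inv_pos.mpr hνpos
        have hν'le : ν' ≤ 1 := by rw [hν'inv]; exact inv_le_one_of_one_le₀ hν1
        have hm1r : (m1:ℝ) = ν + ν' := by rw [hνdef, hν'def]; ring
        have hmr : (m:ℝ) = μ + μ' := by rw [hμdef, hμ'def]; ring
        have hstep : (1+sq5)/2 ≤ ν * ((3+sq5)/2) - ν := by
          nlinarith [hν1, sq5_gt, mul_nonneg (by linarith : (0:ℝ) ≤ ν - 1)
            (by linarith [sq5_gt] : (0:ℝ) ≤ (1+sq5)/2)]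
        have hm1lt : (m1:ℝ) < (m:ℝ) := by
          rw [hm1r, hmr]
          have hs1 : (1:ℝ) < (1+sq5)/2 := by linarith [sq5_gt]
          linarith [hrel, hμ'pos, hν'le, hstep]
        have hm1B : m1 ≤ (B:ℤ) := by
          have : m1 < m := by exact_mod_cast hm1lt
          push_cast at hm
          omega
        obtain ⟨k, hk⟩ := ih m1 n1 hm1B hnorm1 hν1
        refine ⟨k + 1, ?_⟩
        rw [hrel, hνdef, hk, ← phi_sq]
        ring

lemma sq5_ne : sq5 ≠ 0 := ne_of_gt sq5_pos

lemma key2 (m n : ℤ) (hnorm : m^2 - 5*n^2 = 4) (hpos : 0 < ((m:ℝ) + n*sq5)/2) :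
    ∃ k : ℤ, ((m:ℝ) + n*sq5)/2 = phi ^ (2*k) := by
  have hnr : ((m:ℝ))^2 - 5*(n:ℝ)^2 = 4 := by exact_mod_cast hnorm
  have hprod : (((m:ℝ) + n*sq5)/2) * (((m:ℝ) - n*sq5)/2) = 1 := by
    linear_combination hnr/4 - ((n:ℝ)^2/4)*sq5_sq
  rcases le_or_gt 1 (((m:ℝ) + n*sq5)/2) with h1 | h1
  · obtain ⟨k, hk⟩ := key m.toNat m n (Int.self_le_toNat m) hnorm h1
    refine ⟨k, ?_⟩
    rw [hk]
    rw [show (2*(k:ℤ)) = ((2*k : ℕ) : ℤ) by push_cast; ring, zpow_natCast]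
  · -- conjugate is ≥ 1
    have hμ'pos : 0 < ((m:ℝ) - n*sq5)/2 := by nlinarith
    have hμ'ge : 1 ≤ ((m:ℝ) - n*sq5)/2 := by nlinarith
    have hnorm' : m^2 - 5*(-n)^2 = 4 := by linear_combination hnorm
    have hμ'eq : ((m:ℝ) + (-n : ℤ)*sq5)/2 = ((m:ℝ) - n*sq5)/2 := by push_cast; ring
    obtain ⟨k, hk⟩ := key m.toNat m (-n) (Int.self_le_toNat m) hnorm' (by rw [hμ'eq]; exact hμ'ge)
    rw [hμ'eq] at hk
    refine ⟨-k, ?_⟩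
    have hne : ((m:ℝ) - n*sq5)/2 ≠ 0 := ne_of_gt hμ'pos
    have : ((m:ℝ) + n*sq5)/2 = (((m:ℝ) - n*sq5)/2)⁻¹ :=
      eq_inv_of_mul_eq_one_left hprod
    rw [this, hk, show (2*(-k:ℤ)) = -((2*k : ℕ) : ℤ) by push_cast; ring, zpow_neg, zpow_natCast]

lemma sqrt5N : Real.sqrt ((5:ℕ):ℝ) = sq5 := by norm_num [sq5]

lemma mem_of_rep (a b : ℚ) (x : ℝ) (hxval : x = ((b:ℚ):ℝ) + ((a/5:ℚ):ℝ)*sq5)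
    (hxs : x * Real.sqrt ((5:ℕ):ℝ) = ((a:ℚ):ℝ) + ((b:ℚ):ℝ)*sq5)
    (hint : IsIntegral ℤ (((a:ℚ):ℝ) + ((b:ℚ):ℝ)*sq5))
    (hn2 : ((a:ℚ):ℝ)^2 - 5*((b:ℚ):ℝ)^2 = 1) :
    inDinv 5 x ∧ x * conjK 5 x = -(1/5) := by
  refine ⟨⟨⟨b, a/5, by rw [sqrt5N]; exact hxval⟩,
    ⟨a, b, by rw [hxs]; norm_num [sq5]⟩, by rw [hxs]; exact hint⟩, ?_⟩
  rw [hxval, conj_eval b (a/5)]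
  push_cast
  linear_combination -hn2/5 - ((a:ℝ)^2/25)*sq5_sq

/-- in `K = ℚ(√5)`, the set of `λ ∈ d⁻¹` of norm `λλ' = -1/5` is exactly
`{± ε₀^{2n}/√5 : n ∈ ℤ}` where `ε₀ = (1+√5)/2`. -/
theorem statement13 :
    {x : ℝ | inDinv 5 x ∧ x * conjK 5 x = -(1/5)} =
      {x : ℝ | ∃ n : ℤ, x = ((1 + Real.sqrt 5) / 2) ^ (2 * n) / Real.sqrt 5 ∨
        x = -(((1 + Real.sqrt 5) / 2) ^ (2 * n) / Real.sqrt 5)} := by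
  ext x
  simp only [Set.mem_setOf_eq]
  constructor
  · rintro ⟨⟨⟨u, v, hx⟩, _, hInt⟩, hnormc⟩
    have hx' : x = (u:ℝ) + v * sq5 := by rw [hx, sqrt5N]
    have hconj : conjK 5 x = (u:ℝ) - v * sq5 := by rw [hx']; exact conj_eval u v
    rw [hconj, hx'] at hnormc
    have hnr : ((u:ℝ))^2 - 5*(v:ℝ)^2 = -(1/5) := by
      linear_combination hnormc + (v:ℝ)^2*sq5_sq
    have hq : (u:ℚ)^2 - 5*v^2 = -(1/5) := by
      have : ((u^2 - 5*v^2 : ℚ) : ℝ) = ((-(1/5) : ℚ) : ℝ) := by push_cast; linarith [hnr]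
      have := Rat.cast_injective (α := ℝ) this
      linarith [this]
    have hxs : x * Real.sqrt ((5:ℕ):ℝ) = ((5*v : ℚ):ℝ) + ((u:ℚ):ℝ) * sq5 := by
      rw [sqrt5N, hx']; push_cast; linear_combination (v:ℝ)*sq5_sq
    rw [hxs] at hInt
    obtain ⟨T, hT⟩ := trace_int (5*v) u hInt
    have hT' : (T:ℚ) = 10*v := by rw [hT]; ring
    have h5r : 5*(2*u)^2 = ((T^2 - 4 : ℤ):ℚ) := by
      push_cast
      linear_combination 20*hq - ((T:ℚ)+10*v)*hT'
    obtain ⟨N, hN⟩ := denom_lemma (2*u) (T^2-4) h5r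
    have hMN : T^2 - 5*N^2 = 4 := by
      have : (T:ℚ)^2 - 5*(N:ℚ)^2 = 4 := by
        linear_combination ((T:ℚ)+10*v)*hT' - 5*((N:ℚ)+2*u)*hN - 20*hq
      exact_mod_cast this
    have hTr : ((T:ℤ):ℝ) = 10*(v:ℝ) := by exact_mod_cast hT'
    have hNr : ((N:ℤ):ℝ) = 2*(u:ℝ) := by exact_mod_cast hN
    have hμ : x * sq5 = ((T:ℝ) + N*sq5)/2 := by
      rw [hx', hTr, hNr]; push_cast; linear_combination (v:ℝ)*sq5_sq
    have hnrTN : ((T:ℝ))^2 - 5*(N:ℝ)^2 = 4 := by exact_mod_cast hMN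
    have hprod : (((T:ℝ) + N*sq5)/2) * (((T:ℝ) - N*sq5)/2) = 1 := by
      linear_combination hnrTN/4 - ((N:ℝ)^2/4)*sq5_sq
    have hxeq : x = (((T:ℝ) + N*sq5)/2) / sq5 := by
      rw [← hμ]; exact (mul_div_cancel_right₀ x sq5_ne).symm
    rcases lt_trichotomy (((T:ℝ) + N*sq5)/2) 0 with hsgn | hsgn | hsgn
    · have hnorm' : (-T)^2 - 5*(-N)^2 = 4 := by linear_combination hMN
      have heq : (((-T:ℤ):ℝ) + ((-N:ℤ):ℝ)*sq5)/2 = -(((T:ℝ) + N*sq5)/2) := by push_cast; ring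
      obtain ⟨k, hk⟩ := key2 (-T) (-N) hnorm' (by rw [heq]; linarith)
      rw [heq] at hk
      refine ⟨k, Or.inr ?_⟩
      show x = -(phi ^ (2*k) / sq5)
      rw [hxeq, ← hk]; ring
    · exfalso
      have h01 : (0:ℝ) = 1 := by rw [← hprod, hsgn, zero_mul]
      norm_num at h01
    · obtain ⟨k, hk⟩ := key2 T N hMN hsgn
      refine ⟨k, Or.inl ?_⟩
      show x = phi ^ (2*k) / sq5
      rw [hxeq, hk]
  · rintro ⟨n, hx | hx⟩ <;>
      obtain ⟨a, b, ha, hb⟩ := pow_repr (2*n)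
    all_goals
      have hnorm1 : ((a:ℝ)+b*sq5)*((a:ℝ)-b*sq5) = 1 := by
        rw [← ha, ← hb, ← mul_zpow, phi_mul_psi, zpow_mul]
        norm_num
    all_goals
      have hn2 : (a:ℝ)^2 - 5*(b:ℝ)^2 = 1 := by
        linear_combination hnorm1 + (b:ℝ)^2*sq5_sq
    · -- positive case
      have hx0 : x = phi ^ (2*n) / sq5 := hx
      refine mem_of_rep a b x ?_ ?_ (by rw [← ha]; exact phi_zpow_integral (2*n)) hn2
      · rw [hx0, ha, div_eq_iff sq5_ne]
        push_cast
        linear_combination (-(a:ℝ)/5)*sq5_sq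
      · rw [sqrt5N, hx0, div_mul_cancel₀ _ sq5_ne, ha]
    · -- negative case
      have hx0 : x = -(phi ^ (2*n) / sq5) := hx
      have hint' : IsIntegral ℤ (((-a:ℚ):ℝ) + ((-b:ℚ):ℝ)*sq5) := by
        have h := (phi_zpow_integral (2*n)).neg
        rw [ha] at h
        convert h using 1
        push_cast; ring
      have hn2' : ((-a:ℚ):ℝ)^2 - 5*((-b:ℚ):ℝ)^2 = 1 := by push_cast; linarith [hn2]
      refine mem_of_rep (-a) (-b) x ?_ ?_ hint' hn2'
      · rw [hx0, ha, ← neg_div, div_eq_iff sq5_ne]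
        push_cast
        linear_combination ((a:ℝ)/5)*sq5_sq
      · rw [sqrt5N, hx0, neg_mul, div_mul_cancel₀ _ sq5_ne, ha]
        push_cast; ring
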